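/- arXiv:math/0604352 — 2 statements merged into one kernel-verified Lean document; each statement's English description precedes it below -/
import Mathlib

section
/- Fix β ≥ 0 and h ∈ ℝ, and let σ = (σ_1, …, σ_n) be drawn from the Curie-Weiss Gibbs measure on {-1,1}^n given by P({σ}) = Z^{-1} exp((β/n) Σ_{i<j} σ_i σ_j + β h Σ_i σ_i), where Z is the normalizing constant. Let m = m(σ) := (1/n) Σ_{i=1}^n σ_i be the magnetization. Then for every n ≥ 1 and every t ≥ 0, P(|m - tanh(β m + β h)| ≥ β/n + t/√n) ≤ 2 exp(-t² / (4(1 + β))). -/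
open Finset



private lemma sinh_le_mul_cosh {x : ℝ} (hx : 0 ≤ x) : Real.sinh x ≤ x * Real.cosh x := by
  have key : ∀ y : ℝ, HasDerivAt (fun u => u * Real.cosh u - Real.sinh u) (y * Real.sinh y) y := by
    intro y
    have h1 := ((hasDerivAt_id y).fun_mul (Real.hasDerivAt_cosh y)).fun_sub (Real.hasDerivAt_sinh y)
    simpa [mul_comm] using h1
  have mono : MonotoneOn (fun u => u * Real.cosh u - Real.sinh u) (Set.Ici (0:ℝ)) := by
    apply monotoneOn_of_deriv_nonneg (convex_Ici 0)
    · exact (Continuous.continuousOn (by continuity))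
    · intro y hy
      exact (key y).differentiableAt.differentiableWithinAt
    · intro y hy
      rw [(key y).deriv]
      simp only [interior_Ici, Set.mem_Ioi] at hy
      exact mul_nonneg hy.le (le_of_lt (Real.sinh_pos_iff.2 hy))
  have h0 := mono (Set.self_mem_Ici) (Set.mem_Ici.2 hx) hx
  simp only [Real.sinh_zero, Real.cosh_zero, mul_zero, zero_mul, sub_zero, zero_sub, neg_zero] at h0
  linarith

private lemma exp_sub_exp_le {a b : ℝ} (hab : b ≤ a) :
    Real.exp a - Real.exp b ≤ (a - b) * (Real.exp a + Real.exp b) / 2 := by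
  have h := sinh_le_mul_cosh (x := (a - b) / 2) (by linarith)
  rw [Real.sinh_eq, Real.cosh_eq] at h
  have e1 : Real.exp ((a+b)/2) > 0 := Real.exp_pos _
  have h2 := mul_le_mul_of_nonneg_left h e1.le
  have ea : Real.exp ((a+b)/2) * Real.exp ((a-b)/2) = Real.exp a := by
    rw [← Real.exp_add]; ring_nf
  have eb : Real.exp ((a+b)/2) * Real.exp (-((a-b)/2)) = Real.exp b := by
    rw [← Real.exp_add]; ring_nf
  nlinarith [Real.exp_pos a, Real.exp_pos b]

private lemma abs_exp_sub_exp (a b : ℝ) :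
    |Real.exp a - Real.exp b| ≤ |a - b| * (Real.exp a + Real.exp b) / 2 := by
  rcases le_total b a with hab | hab
  · rw [abs_of_nonneg (by linarith [Real.exp_le_exp.2 hab] : (0:ℝ) ≤ Real.exp a - Real.exp b),
      abs_of_nonneg (by linarith : (0:ℝ) ≤ a - b)]
    exact exp_sub_exp_le hab
  · rw [abs_sub_comm, abs_sub_comm a b,
      abs_of_nonneg (by linarith [Real.exp_le_exp.2 hab] : (0:ℝ) ≤ Real.exp b - Real.exp a),
      abs_of_nonneg (by linarith : (0:ℝ) ≤ b - a)]
    calc Real.exp b - Real.exp a ≤ (b - a) * (Real.exp b + Real.exp a) / 2 := exp_sub_exp_le hab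
    _ = (b - a) * (Real.exp a + Real.exp b) / 2 := by ring

private lemma tanh_lipschitz (x y : ℝ) : |Real.tanh x - Real.tanh y| ≤ |x - y| := by
  have hd : ∀ z : ℝ, HasDerivAt Real.tanh (1 / Real.cosh z ^ 2) z := by
    intro z
    have hc : Real.cosh z ≠ 0 := ne_of_gt (Real.cosh_pos z)
    have h := (Real.hasDerivAt_sinh z).div (Real.hasDerivAt_cosh z) hc
    have : (Real.cosh z * Real.cosh z - Real.sinh z * Real.sinh z) / Real.cosh z ^ 2
        = 1 / Real.cosh z ^ 2 := by
      rw [← Real.cosh_sq_sub_sinh_sq z]; ring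
    rw [this] at h
    have ht : Real.tanh = fun y => Real.sinh y / Real.cosh y :=
      funext fun y => Real.tanh_eq_sinh_div_cosh y
    rw [ht]
    exact h
  have hlip : LipschitzWith 1 Real.tanh := by
    apply lipschitzWith_of_nnnorm_deriv_le (fun z => (hd z).differentiableAt)
    intro z
    rw [(hd z).deriv]
    rw [← NNReal.coe_le_coe, coe_nnnorm, Real.norm_eq_abs, NNReal.coe_one]
    rw [abs_of_nonneg (by positivity)]
    rw [div_le_one (by positivity)]
    nlinarith [Real.one_le_cosh z]
  have := hlip.dist_le_mul x y
  simpa [Real.dist_eq] using this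


private def flp {n : ℕ} (i : Fin n) (s : Fin n → Bool) : Fin n → Bool :=
  Function.update s i (!(s i))

private lemma flp_apply {n : ℕ} (i : Fin n) (s : Fin n → Bool) : flp i s i = !(s i) := by
  simp [flp]

private lemma flp_apply_ne {n : ℕ} {i j : Fin n} (s : Fin n → Bool) (hij : j ≠ i) :
    flp i s j = s j := by
  simp [flp, Function.update_of_ne hij]

private lemma flp_flp {n : ℕ} (i : Fin n) (s : Fin n → Bool) : flp i (flp i s) = s := by
  funext j
  by_cases hj : j = i
  · subst hj; simp [flp]
  · simp [flp, Function.update_of_ne hj]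

private lemma flp_invol {n : ℕ} (i : Fin n) : Function.Involutive (flp (n := n) i) :=
  fun s => flp_flp i s

private lemma sum_flp {n : ℕ} (i : Fin n) (F : (Fin n → Bool) → ℝ) :
    ∑ s : Fin n → Bool, F (flp i s) = ∑ s : Fin n → Bool, F s :=
  Fintype.sum_bijective (flp i) (flp_invol i).bijective _ _ (fun s => rfl)

private lemma mgf_bound {n : ℕ} (w g : (Fin n → Bool) → ℝ) (hwpos : ∀ s, 0 < w s)
    (d : Fin n → (Fin n → Bool) → ℝ)
    (hd_anti : ∀ (i : Fin n) s, d i (flp i s) = - d i s)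
    (hd_bd : ∀ (i : Fin n) s, |d i s| ≤ 2)
    (hident : ∀ s, w s * g s = ∑ i, w s * w (flp i s) / (w s + w (flp i s)) * d i s)
    (c : ℝ) (hc : 0 ≤ c)
    (hgc : ∀ (i : Fin n) s, |g s - g (flp i s)| ≤ c)
    (θ : ℝ) (hθ : 0 ≤ θ) :
    ∑ s : Fin n → Bool, w s * Real.exp (θ * g s)
      ≤ (∑ s : Fin n → Bool, w s) * Real.exp (n * c * θ ^ 2 / 2) := by
  set r : Fin n → (Fin n → Bool) → ℝ :=
    fun i s => w s * w (flp i s) / (w s + w (flp i s)) with hr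
  have hwadd : ∀ (i : Fin n) s, 0 < w s + w (flp i s) :=
    fun i s => add_pos (hwpos s) (hwpos (flp i s))
  have hr_symm : ∀ (i : Fin n) s, r i (flp i s) = r i s := by
    intro i s; simp only [hr, flp_flp]; ring
  have hr_nonneg : ∀ (i : Fin n) s, 0 ≤ r i s := by
    intro i s
    exact div_nonneg (mul_nonneg (hwpos s).le (hwpos _).le) (hwadd i s).le
  have hr_le : ∀ (i : Fin n) s, r i s ≤ w s := by
    intro i s
    rw [hr, div_le_iff₀ (hwadd i s)]
    nlinarith [hwpos s, hwpos (flp i s)]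
  -- the moment generating function and its derivative
  set φ : ℝ → ℝ := fun u => ∑ s : Fin n → Bool, w s * Real.exp (u * g s) with hφ
  set D : ℝ → ℝ := fun u => ∑ s : Fin n → Bool, w s * g s * Real.exp (u * g s) with hD
  have hderiv : ∀ u, HasDerivAt φ (D u) u := by
    intro u
    have : ∀ s ∈ (Finset.univ : Finset (Fin n → Bool)),
        HasDerivAt (fun u => w s * Real.exp (u * g s)) (w s * g s * Real.exp (u * g s)) u := by
      intro s _
      have h1 : HasDerivAt (fun u : ℝ => u * g s) (g s) u := hasDerivAt_mul_const (g s)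
      have h2 := h1.exp
      have h3 := h2.const_mul (w s)
      exact h3.congr_deriv (by ring)
    simpa [hφ, hD] using HasDerivAt.fun_sum this
  have hφpos : ∀ u, 0 < φ u := by
    intro u
    exact Finset.sum_pos (fun s _ => mul_pos (hwpos s) (Real.exp_pos _)) Finset.univ_nonempty
  -- key derivative bound for u ≥ 0
  have hDbound : ∀ u : ℝ, 0 ≤ u → D u ≤ (n : ℝ) * c * u * φ u := by
    intro u hu
    have hstep1 : D u = ∑ i : Fin n, ∑ s : Fin n → Bool, r i s * d i s * Real.exp (u * g s) := by
      rw [hD, Finset.sum_comm]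
      apply Finset.sum_congr rfl
      intro s _
      rw [← Finset.sum_mul]
      rw [show (∑ i, r i s * d i s) = w s * g s from (hident s).symm]
    have hSi : ∀ i : Fin n,
        (∑ s : Fin n → Bool, r i s * d i s * Real.exp (u * g s)) ≤ c * u * φ u := by
      intro i
      have hre : (∑ s : Fin n → Bool, r i s * d i s * Real.exp (u * g s))
          = ∑ s : Fin n → Bool, - (r i s * d i s * Real.exp (u * g (flp i s))) := by
        rw [← sum_flp i (fun s => r i s * d i s * Real.exp (u * g s))]
        apply Finset.sum_congr rfl
        intro s _
        rw [hr_symm, hd_anti]; ring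
      have h2Si : 2 * (∑ s : Fin n → Bool, r i s * d i s * Real.exp (u * g s))
          = ∑ s : Fin n → Bool,
              r i s * (d i s * (Real.exp (u * g s) - Real.exp (u * g (flp i s)))) := by
        calc 2 * (∑ s : Fin n → Bool, r i s * d i s * Real.exp (u * g s))
            = (∑ s : Fin n → Bool, r i s * d i s * Real.exp (u * g s))
              + (∑ s : Fin n → Bool, - (r i s * d i s * Real.exp (u * g (flp i s)))) := by
              rw [← hre]; ring
          _ = ∑ s : Fin n → Bool,
              r i s * (d i s * (Real.exp (u * g s) - Real.exp (u * g (flp i s)))) := by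
              rw [← Finset.sum_add_distrib]
              apply Finset.sum_congr rfl
              intro s _; ring
      have hbound : ∀ s : Fin n → Bool,
          r i s * (d i s * (Real.exp (u * g s) - Real.exp (u * g (flp i s))))
            ≤ r i s * (c * u * (Real.exp (u * g s) + Real.exp (u * g (flp i s)))) := by
        intro s
        apply mul_le_mul_of_nonneg_left _ (hr_nonneg i s)
        calc d i s * (Real.exp (u * g s) - Real.exp (u * g (flp i s)))
            ≤ |d i s * (Real.exp (u * g s) - Real.exp (u * g (flp i s)))| := le_abs_self _
          _ = |d i s| * |Real.exp (u * g s) - Real.exp (u * g (flp i s))| := abs_mul _ _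
          _ ≤ 2 * (|u * g s - u * g (flp i s)|
                * (Real.exp (u * g s) + Real.exp (u * g (flp i s))) / 2) := by
              apply mul_le_mul (hd_bd i s) (abs_exp_sub_exp _ _) (abs_nonneg _) (by norm_num)
          _ = |u| * |g s - g (flp i s)|
                * (Real.exp (u * g s) + Real.exp (u * g (flp i s))) := by
              rw [← abs_mul, ← mul_sub]; ring
          _ ≤ c * u * (Real.exp (u * g s) + Real.exp (u * g (flp i s))) := by
              apply mul_le_mul_of_nonneg_right _
                (by positivity)
              rw [abs_of_nonneg hu]
              calc u * |g s - g (flp i s)| ≤ u * c :=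
                    mul_le_mul_of_nonneg_left (hgc i s) hu
                _ = c * u := mul_comm _ _
      have hsum2 : 2 * (∑ s : Fin n → Bool, r i s * d i s * Real.exp (u * g s)) ≤ c * u * (2 * ∑ s : Fin n → Bool, r i s * Real.exp (u * g s)) := by
        rw [h2Si]
        calc ∑ s : Fin n → Bool,
              r i s * (d i s * (Real.exp (u * g s) - Real.exp (u * g (flp i s))))
            ≤ ∑ s : Fin n → Bool,
              r i s * (c * u * (Real.exp (u * g s) + Real.exp (u * g (flp i s)))) :=
              Finset.sum_le_sum (fun s _ => hbound s)
          _ = c * u * (∑ s : Fin n → Bool, r i s * Real.exp (u * g s)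
                + ∑ s : Fin n → Bool, r i s * Real.exp (u * g (flp i s))) := by
              rw [← Finset.sum_add_distrib, Finset.mul_sum]
              apply Finset.sum_congr rfl
              intro s _; ring
          _ = c * u * (2 * ∑ s : Fin n → Bool, r i s * Real.exp (u * g s)) := by
              congr 1
              have : ∑ s : Fin n → Bool, r i s * Real.exp (u * g (flp i s))
                  = ∑ s : Fin n → Bool, r i s * Real.exp (u * g s) := by
                rw [← sum_flp i (fun s => r i s * Real.exp (u * g s))]
                apply Finset.sum_congr rfl
                intro s _
                rw [hr_symm]
              rw [this]; ring
      have hrφ : ∑ s : Fin n → Bool, r i s * Real.exp (u * g s) ≤ φ u := by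
        apply Finset.sum_le_sum
        intro s _
        exact mul_le_mul_of_nonneg_right (hr_le i s) (Real.exp_pos _).le
      have := le_trans hsum2 (by
        have h1 : c * u * (2 * ∑ s : Fin n → Bool, r i s * Real.exp (u * g s))
            ≤ c * u * (2 * φ u) := by
          apply mul_le_mul_of_nonneg_left _ (by positivity)
          linarith
        exact h1)
      linarith
    calc D u = ∑ i : Fin n, ∑ s : Fin n → Bool, r i s * d i s * Real.exp (u * g s) := hstep1
      _ ≤ ∑ _i : Fin n, c * u * φ u := Finset.sum_le_sum (fun i _ => hSi i)
      _ = (n : ℝ) * c * u * φ u := by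
          rw [Finset.sum_const, card_univ, Fintype.card_fin, nsmul_eq_mul]; ring
  -- integrate the differential inequality
  set K : ℝ := (n : ℝ) * c with hK
  have hK0 : 0 ≤ K := by positivity
  have hψderiv : ∀ u, HasDerivAt (fun u => φ u * Real.exp (-(K * u ^ 2 / 2)))
      ((D u - K * u * φ u) * Real.exp (-(K * u ^ 2 / 2))) u := by
    intro u
    have h1 : HasDerivAt (fun u : ℝ => -(K * u ^ 2 / 2)) (-(K * u)) u := by
      have := ((hasDerivAt_pow 2 u).const_mul K).div_const 2
      have h2 := this.fun_neg
      exact h2.congr_deriv (by norm_num; ring)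
    have h2 := h1.exp
    have h3 := (hderiv u).mul h2
    exact h3.congr_deriv (by ring)
  have hanti : AntitoneOn (fun u => φ u * Real.exp (-(K * u ^ 2 / 2))) (Set.Ici (0 : ℝ)) := by
    apply antitoneOn_of_deriv_nonpos (convex_Ici 0)
    · exact fun u _ => (hψderiv u).differentiableAt.continuousAt.continuousWithinAt
    · intro u _
      exact (hψderiv u).differentiableAt.differentiableWithinAt
    · intro u hu
      simp only [interior_Ici, Set.mem_Ioi] at hu
      rw [(hψderiv u).deriv]
      apply mul_nonpos_of_nonpos_of_nonneg _ (Real.exp_pos _).le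
      linarith [hDbound u hu.le]
  have hθle := hanti (Set.self_mem_Ici) (Set.mem_Ici.2 hθ) hθ
  simp only [ne_eq, OfNat.ofNat_ne_zero, not_false_eq_true, zero_pow, mul_zero, zero_div,
    neg_zero, Real.exp_zero, mul_one] at hθle
  have hφ0 : φ 0 = ∑ s : Fin n → Bool, w s := by
    simp [hφ]
  rw [hφ0] at hθle
  have hexp : 0 < Real.exp (-(K * θ ^ 2 / 2)) := Real.exp_pos _
  have hmul : Real.exp (-(K * θ ^ 2 / 2)) * Real.exp (K * θ ^ 2 / 2) = 1 := by
    rw [← Real.exp_add, neg_add_cancel, Real.exp_zero]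
  have : φ θ ≤ (∑ s : Fin n → Bool, w s) * Real.exp (K * θ ^ 2 / 2) := by
    calc φ θ = (φ θ * Real.exp (-(K * θ ^ 2 / 2))) * Real.exp (K * θ ^ 2 / 2) := by
          rw [mul_assoc, hmul, mul_one]
      _ ≤ (∑ s : Fin n → Bool, w s) * Real.exp (K * θ ^ 2 / 2) :=
          mul_le_mul_of_nonneg_right hθle (Real.exp_pos _).le
  calc ∑ s : Fin n → Bool, w s * Real.exp (θ * g s) = φ θ := rfl
    _ ≤ (∑ s : Fin n → Bool, w s) * Real.exp (K * θ ^ 2 / 2) := this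
    _ = (∑ s : Fin n → Bool, w s) * Real.exp ((n : ℝ) * c * θ ^ 2 / 2) := by rw [hK]

private lemma tail_bound {n : ℕ} (w g : (Fin n → Bool) → ℝ) (hwpos : ∀ s, 0 < w s)
    (d : Fin n → (Fin n → Bool) → ℝ)
    (hd_anti : ∀ (i : Fin n) s, d i (flp i s) = - d i s)
    (hd_bd : ∀ (i : Fin n) s, |d i s| ≤ 2)
    (hident : ∀ s, w s * g s = ∑ i, w s * w (flp i s) / (w s + w (flp i s)) * d i s)
    (c : ℝ) (hc : 0 ≤ c)
    (hgc : ∀ (i : Fin n) s, |g s - g (flp i s)| ≤ c)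
    (a θ : ℝ) (hθ : 0 ≤ θ) :
    (∑ s ∈ Finset.univ.filter (fun s => a ≤ g s), w s)
      ≤ (∑ s : Fin n → Bool, w s) * Real.exp ((n : ℝ) * c * θ ^ 2 / 2 - θ * a) := by
  have hmgf := mgf_bound w g hwpos d hd_anti hd_bd hident c hc hgc θ hθ
  have h1 : (∑ s ∈ Finset.univ.filter (fun s => a ≤ g s), w s) * Real.exp (θ * a)
      ≤ ∑ s : Fin n → Bool, w s * Real.exp (θ * g s) := by
    rw [Finset.sum_mul]
    calc ∑ s ∈ Finset.univ.filter (fun s => a ≤ g s), w s * Real.exp (θ * a)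
        ≤ ∑ s ∈ Finset.univ.filter (fun s => a ≤ g s), w s * Real.exp (θ * g s) := by
          apply Finset.sum_le_sum
          intro s hs
          have := (Finset.mem_filter.1 hs).2
          exact mul_le_mul_of_nonneg_left
            (Real.exp_le_exp.2 (mul_le_mul_of_nonneg_left this hθ)) (hwpos s).le
      _ ≤ ∑ s : Fin n → Bool, w s * Real.exp (θ * g s) :=
          Finset.sum_le_sum_of_subset_of_nonneg (Finset.filter_subset _ _)
            (fun s _ _ => (mul_pos (hwpos s) (Real.exp_pos _)).le)
  have h2 : (∑ s ∈ Finset.univ.filter (fun s => a ≤ g s), w s) * Real.exp (θ * a)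
      ≤ (∑ s : Fin n → Bool, w s) * Real.exp ((n : ℝ) * c * θ ^ 2 / 2) := le_trans h1 hmgf
  have hea : 0 < Real.exp (θ * a) := Real.exp_pos _
  rw [← le_div_iff₀ hea] at h2
  calc (∑ s ∈ Finset.univ.filter (fun s => a ≤ g s), w s)
      ≤ (∑ s : Fin n → Bool, w s) * Real.exp ((n : ℝ) * c * θ ^ 2 / 2) / Real.exp (θ * a) := h2
    _ = (∑ s : Fin n → Bool, w s) * Real.exp ((n : ℝ) * c * θ ^ 2 / 2 - θ * a) := by
        rw [Real.exp_sub]; ring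

private lemma pair_sum_eq {n : ℕ} (χ : Fin n → ℝ) (hχ : ∀ i, χ i * χ i = 1) :
    ∑ p ∈ Finset.univ.filter (fun p : Fin n × Fin n => p.1 < p.2), χ p.1 * χ p.2
      = ((∑ i, χ i) ^ 2 - n) / 2 := by
  have hsq : (∑ i, χ i) ^ 2 = ∑ p : Fin n × Fin n, χ p.1 * χ p.2 := by
    rw [sq, Finset.sum_mul_sum, Fintype.sum_prod_type]
  have h1 := Finset.sum_filter_add_sum_filter_not (Finset.univ : Finset (Fin n × Fin n))
    (fun p => p.1 < p.2) (fun p => χ p.1 * χ p.2)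
  have h2 := Finset.sum_filter_add_sum_filter_not
    (Finset.univ.filter (fun p : Fin n × Fin n => ¬ p.1 < p.2))
    (fun p => p.2 < p.1) (fun p => χ p.1 * χ p.2)
  have e1 : (Finset.univ.filter (fun p : Fin n × Fin n => ¬ p.1 < p.2)).filter
      (fun p => p.2 < p.1) = Finset.univ.filter (fun p : Fin n × Fin n => p.2 < p.1) := by
    ext p
    simp only [Finset.mem_filter, Finset.mem_univ, true_and]
    exact ⟨fun h => h.2, fun h => ⟨lt_asymm h, h⟩⟩
  have e2 : (Finset.univ.filter (fun p : Fin n × Fin n => ¬ p.1 < p.2)).filter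
      (fun p => ¬ p.2 < p.1) = Finset.univ.filter (fun p : Fin n × Fin n => p.1 = p.2) := by
    ext p
    simp only [Finset.mem_filter, Finset.mem_univ, true_and, not_lt]
    exact ⟨fun h => le_antisymm h.2 h.1, fun h => ⟨le_of_eq h.symm, le_of_eq h⟩⟩
  rw [e1, e2] at h2
  have hBA : ∑ p ∈ Finset.univ.filter (fun p : Fin n × Fin n => p.2 < p.1), χ p.1 * χ p.2
      = ∑ p ∈ Finset.univ.filter (fun p : Fin n × Fin n => p.1 < p.2), χ p.1 * χ p.2 := by
    refine Finset.sum_bij' (fun p _ => Prod.swap p) (fun p _ => Prod.swap p)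
      ?_ ?_ ?_ ?_ ?_
    case _ => intro p hp
              simp only [Finset.mem_filter, Finset.mem_univ, true_and] at hp ⊢
              exact hp
    case _ => intro p hp
              simp only [Finset.mem_filter, Finset.mem_univ, true_and] at hp ⊢
              exact hp
    case _ => intro p _; exact Prod.swap_swap p
    case _ => intro p _; exact Prod.swap_swap p
    case _ => intro p _; exact mul_comm _ _
  have hC : ∑ p ∈ Finset.univ.filter (fun p : Fin n × Fin n => p.1 = p.2), χ p.1 * χ p.2
      = (n : ℝ) := by
    have : ∑ p ∈ Finset.univ.filter (fun p : Fin n × Fin n => p.1 = p.2), χ p.1 * χ p.2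
        = ∑ _i : Fin n, (1 : ℝ) := by
      refine Finset.sum_bij' (fun p _ => p.1) (fun i _ => (i, i)) ?_ ?_ ?_ ?_ ?_
      case _ => intro p _; exact Finset.mem_univ _
      case _ => intro i _; simp
      case _ => intro p hp
                have h12 := (Finset.mem_filter.1 hp).2
                exact Prod.ext rfl h12
      case _ => intro i _; rfl
      case _ => intro p hp
                have h12 := (Finset.mem_filter.1 hp).2
                rw [← h12]; exact hχ p.1
    rw [this]
    simp
  rw [hBA, hC] at h2
  rw [hsq]
  linarith

private lemma cond_mean_identity (b x eps : ℝ) (hb : 0 < b)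
    (heps : eps = 1 ∨ eps = -1) :
    (b * Real.exp (2 * eps * x)) * (eps - Real.tanh x)
      = (b * Real.exp (2 * eps * x)) * b / ((b * Real.exp (2 * eps * x)) + b) * (2 * eps) := by
  have hE : 0 < Real.exp x := Real.exp_pos x
  have htanh : Real.tanh x = (Real.exp x - (Real.exp x)⁻¹) / (Real.exp x + (Real.exp x)⁻¹) := by
    rw [Real.tanh_eq_sinh_div_cosh, Real.sinh_eq, Real.cosh_eq, Real.exp_neg]
    have hd : Real.exp x + (Real.exp x)⁻¹ > 0 := by positivity
    field_simp
  rcases heps with he | he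
  · subst he
    have h2 : Real.exp (2 * 1 * x) = Real.exp x * Real.exp x := by
      rw [show (2 : ℝ) * 1 * x = x + x by ring, Real.exp_add]
    rw [h2, htanh]
    have hd1 : Real.exp x + (Real.exp x)⁻¹ > 0 := by positivity
    have hd2 : b * (Real.exp x * Real.exp x) + b > 0 := by positivity
    field_simp
    ring
  · subst he
    have h2 : Real.exp (2 * (-1) * x) = ((Real.exp x) * (Real.exp x))⁻¹ := by
      rw [show (2 : ℝ) * (-1) * x = -(x + x) by ring, Real.exp_neg, Real.exp_add]
    rw [h2, htanh]
    have hd2 : b * (Real.exp x * Real.exp x)⁻¹ + b > 0 := by positivity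
    field_simp
    ring

/-- **Proposition 1.3 (magnetization in the Curie–Weiss model).**
Configurations are encoded by `s : Fin n → Bool` with spins `σ s i = ±1`.
The Gibbs weight is `w s = exp((β/n) ∑_{i<j} σ_i σ_j + β h ∑_i σ_i)`, and the
magnetization is `m s = (1/n) ∑ i, σ s i`. Then for all `t ≥ 0`,
`P(|m - tanh(β m + β h)| ≥ β/n + t/√n) ≤ 2 exp(-t²/(4(1+β)))`, where the probability
of an event is the sum of Gibbs weights over the event divided by the total weight. -/
theorem curie_weiss_magnetization_concentration
    (n : ℕ) (hn : 1 ≤ n) (β h : ℝ) (hβ : 0 ≤ β)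
    (σ : (Fin n → Bool) → Fin n → ℝ)
    (hσ : ∀ s i, σ s i = if s i then 1 else -1)
    (w : (Fin n → Bool) → ℝ)
    (hw : ∀ s, w s = Real.exp (β / n *
        (∑ p ∈ Finset.univ.filter (fun p : Fin n × Fin n => p.1 < p.2), σ s p.1 * σ s p.2)
      + β * h * ∑ i, σ s i))
    (m : (Fin n → Bool) → ℝ) (hm : ∀ s, m s = (1 / n) * ∑ i, σ s i)
    (t : ℝ) (ht : 0 ≤ t) :
    (∑ s ∈ Finset.univ.filter
        (fun s : Fin n → Bool =>
          β / n + t / Real.sqrt n ≤ |m s - Real.tanh (β * m s + β * h)|), w s)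
      / (∑ s : Fin n → Bool, w s)
      ≤ 2 * Real.exp (-t ^ 2 / (4 * (1 + β))) := by
  have hn0 : (0:ℝ) < n := by exact_mod_cast hn
  have hn' : (n:ℝ) ≠ 0 := ne_of_gt hn0
  have hβ1 : (0:ℝ) < 1 + β := by linarith
  have hsn : 0 < Real.sqrt n := Real.sqrt_pos.2 hn0
  have hss : Real.sqrt n * Real.sqrt n = (n:ℝ) := Real.mul_self_sqrt hn0.le
  have hχpm : ∀ s (i : Fin n), σ s i = 1 ∨ σ s i = -1 := by
    intro s i; rw [hσ]
    by_cases hsi : s i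
    · left; simp [hsi]
    · right; simp [hsi]
  have hχsq : ∀ s (i : Fin n), σ s i * σ s i = 1 := by
    intro s i; rcases hχpm s i with hc | hc <;> rw [hc] <;> norm_num
  have hχabs : ∀ s (i : Fin n), |σ s i| = 1 := by
    intro s i; rcases hχpm s i with hc | hc <;> rw [hc] <;> norm_num
  set T : (Fin n → Bool) → ℝ := fun s => ∑ i, σ s i with hT
  have hwpos : ∀ s, 0 < w s := fun s => by rw [hw]; exact Real.exp_pos _
  have hσflp : ∀ (i : Fin n) s (j : Fin n),
      σ (flp i s) j = if j = i then - σ s j else σ s j := by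
    intro i s j
    by_cases hj : j = i
    · subst hj
      rw [hσ, hσ, flp_apply]
      cases hsj : s j <;> simp
    · rw [hσ, hσ, flp_apply_ne s hj]
      simp [hj]
  have hTflp : ∀ (i : Fin n) s, T (flp i s) = T s - 2 * σ s i := by
    intro i s
    calc T (flp i s) = ∑ j, (σ s j - (if j = i then 2 * σ s i else 0)) := by
          apply Finset.sum_congr rfl
          intro j _
          rw [hσflp i s j]
          by_cases hj : j = i
          · subst hj; simp; ring
          · simp [hj]
      _ = T s - 2 * σ s i := by
          rw [Finset.sum_sub_distrib, Finset.sum_ite_eq' Finset.univ i (fun _ => 2 * σ s i)]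
          simp [hT]
  have hpair : ∀ s, (∑ p ∈ Finset.univ.filter (fun p : Fin n × Fin n => p.1 < p.2),
      σ s p.1 * σ s p.2) = ((T s) ^ 2 - n) / 2 := fun s => pair_sum_eq (σ s) (hχsq s)
  have hw' : ∀ s, w s = Real.exp (β / n * (((T s) ^ 2 - n) / 2) + β * h * T s) := by
    intro s; rw [hw, hpair s]
  set x : Fin n → (Fin n → Bool) → ℝ := fun i s => β * (T s - σ s i) / n + β * h with hx
  have hwx : ∀ (i : Fin n) s, w s = w (flp i s) * Real.exp (2 * σ s i * x i s) := by
    intro i s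
    rw [hw', hw', ← Real.exp_add]
    congr 1
    rw [hTflp i s, hx]
    field_simp
    ring
  set g : (Fin n → Bool) → ℝ := fun s => ∑ i, (σ s i - Real.tanh (x i s)) with hg
  set d : Fin n → (Fin n → Bool) → ℝ := fun i s => 2 * σ s i with hd
  have hd_anti : ∀ (i : Fin n) s, d i (flp i s) = - d i s := by
    intro i s
    simp only [hd]
    rw [hσflp i s i]
    simp
  have hd_bd : ∀ (i : Fin n) s, |d i s| ≤ 2 := by
    intro i s
    simp only [hd, abs_mul, hχabs s i]
    norm_num
  have hident : ∀ s, w s * g s = ∑ i, w s * w (flp i s) / (w s + w (flp i s)) * d i s := by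
    intro s
    simp only [hg, hd, Finset.mul_sum]
    apply Finset.sum_congr rfl
    intro i _
    have hkey := cond_mean_identity (w (flp i s)) (x i s) (σ s i) (hwpos (flp i s)) (hχpm s i)
    rw [← hwx i s] at hkey
    exact hkey
  -- bound on the per-flip change in g
  have hxflp : ∀ (i j : Fin n) s, x j (flp i s)
      = x j s + (if j = i then 0 else - (2 * β * σ s i / n)) := by
    intro i j s
    simp only [hx]
    rw [hTflp i s, hσflp i s j]
    by_cases hj : j = i
    · subst hj; simp; ring
    · simp only [hj, if_false]
      field_simp
      ring
  have hgc : ∀ (i : Fin n) s, |g s - g (flp i s)| ≤ 2 + 2 * β := by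
    intro i s
    have hdecomp : g s - g (flp i s)
        = ∑ j, ((σ s j - σ (flp i s) j) - (Real.tanh (x j s) - Real.tanh (x j (flp i s)))) := by
      simp only [hg, ← Finset.sum_sub_distrib]
      apply Finset.sum_congr rfl
      intro j _; ring
    rw [hdecomp]
    calc |∑ j, ((σ s j - σ (flp i s) j) - (Real.tanh (x j s) - Real.tanh (x j (flp i s))))|
        ≤ ∑ j, |(σ s j - σ (flp i s) j) - (Real.tanh (x j s) - Real.tanh (x j (flp i s)))| :=
          Finset.abs_sum_le_sum_abs _ _
      _ ≤ ∑ j, (2 * β / n + if j = i then 2 else 0) := by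
          apply Finset.sum_le_sum
          intro j _
          by_cases hj : j = i
          · rw [hj]
            rw [hσflp i s i]
            have hxe : x i (flp i s) = x i s := by rw [hxflp i i s]; simp
            rw [hxe]
            simp only [if_pos rfl, sub_self, sub_zero, if_pos]
            calc |σ s i - -σ s i| = 2 * |σ s i| := by
                  rw [show σ s i - -σ s i = 2 * σ s i by ring, abs_mul,
                    abs_of_nonneg (by norm_num : (0:ℝ) ≤ 2)]
              _ = 2 := by rw [hχabs s i]; ring
              _ ≤ 2 * β / n + 2 := by
                  have : 0 ≤ 2 * β / n := by positivity
                  linarith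
          · rw [hσflp i s j]
            simp only [hj, if_false, sub_self, zero_sub, abs_neg, add_zero]
            calc |Real.tanh (x j s) - Real.tanh (x j (flp i s))|
                ≤ |x j s - x j (flp i s)| := tanh_lipschitz _ _
              _ = 2 * β / n := by
                  rw [hxflp i j s]
                  simp only [hj, if_false]
                  rw [show x j s - (x j s + - (2 * β * σ s i / n)) = 2 * β * σ s i / n by ring]
                  rw [abs_div, abs_mul, abs_mul, hχabs s i]
                  rw [abs_of_nonneg (by norm_num : (0:ℝ) ≤ 2), abs_of_nonneg hβ,
                    Nat.abs_cast]
                  ring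
      _ = 2 * β + 2 := by
          rw [Finset.sum_add_distrib, Finset.sum_const, Finset.sum_ite_eq' Finset.univ i
            (fun _ => (2:ℝ))]
          simp [card_univ, mul_comm]
          field_simp
      _ ≤ 2 + 2 * β := by linarith
  -- distance from x i s to the mean-field argument
  have hxm : ∀ s (i : Fin n), |x i s - (β * m s + β * h)| ≤ β / n := by
    intro s i
    rw [hm s, hx]
    have he : β * (T s - σ s i) / n + β * h - (β * (1 / n * ∑ j, σ s j) + β * h)
        = -(β * σ s i / n) := by
      rw [hT]
      field_simp
      ring
    rw [he, abs_neg]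
    have : |β * σ s i / (n:ℝ)| = β / n := by
      rw [abs_div, abs_mul, abs_of_nonneg hβ, hχabs s i, Nat.abs_cast, mul_one]
    rw [this]
  -- event reduction: the event implies |g| is large
  have hev : ∀ s, (β / n + t / Real.sqrt n ≤ |m s - Real.tanh (β * m s + β * h)|) →
      Real.sqrt n * t ≤ |g s| := by
    intro s hs
    have hkey : (n:ℝ) * (m s - Real.tanh (β * m s + β * h))
        = g s + ∑ i, (Real.tanh (x i s) - Real.tanh (β * m s + β * h)) := by
      have h1 : g s + ∑ i, (Real.tanh (x i s) - Real.tanh (β * m s + β * h))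
          = ∑ i, (σ s i - Real.tanh (β * m s + β * h)) := by
        rw [hg, ← Finset.sum_add_distrib]
        apply Finset.sum_congr rfl
        intro i _; ring
      rw [h1, Finset.sum_sub_distrib, Finset.sum_const, hm s]
      simp only [card_univ, Fintype.card_fin, nsmul_eq_mul]
      field_simp
    have habs : (n:ℝ) * |m s - Real.tanh (β * m s + β * h)| ≤ |g s| + β := by
      calc (n:ℝ) * |m s - Real.tanh (β * m s + β * h)|
          = |(n:ℝ) * (m s - Real.tanh (β * m s + β * h))| := by
            rw [abs_mul, Nat.abs_cast]
        _ = |g s + ∑ i, (Real.tanh (x i s) - Real.tanh (β * m s + β * h))| := by rw [hkey]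
        _ ≤ |g s| + |∑ i, (Real.tanh (x i s) - Real.tanh (β * m s + β * h))| := abs_add_le _ _
        _ ≤ |g s| + ∑ i, |Real.tanh (x i s) - Real.tanh (β * m s + β * h)| := by
            have := Finset.abs_sum_le_sum_abs
              (fun i => Real.tanh (x i s) - Real.tanh (β * m s + β * h))
              (Finset.univ : Finset (Fin n))
            linarith
        _ ≤ |g s| + ∑ _i : Fin n, β / (n:ℝ) := by
            have : ∀ i ∈ Finset.univ, |Real.tanh (x i s) - Real.tanh (β * m s + β * h)|
                ≤ β / (n:ℝ) := fun i _ => le_trans (tanh_lipschitz _ _) (hxm s i)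
            have := Finset.sum_le_sum this
            linarith
        _ = |g s| + β := by
            rw [Finset.sum_const]
            simp only [card_univ, Fintype.card_fin, nsmul_eq_mul]
            field_simp
    have h1 : (n:ℝ) * (β / n + t / Real.sqrt n)
        ≤ (n:ℝ) * |m s - Real.tanh (β * m s + β * h)| :=
      mul_le_mul_of_nonneg_left hs hn0.le
    have h2 : (n:ℝ) * (β / n + t / Real.sqrt n) = β + Real.sqrt n * t := by
      have hts : (n:ℝ) * (t / Real.sqrt n) = Real.sqrt n * t := by
        rw [show (n:ℝ) * (t / Real.sqrt n) = ((n:ℝ) / Real.sqrt (n:ℝ)) * t by ring,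
          Real.div_sqrt]
      have hb2 : (n:ℝ) * (β / n) = β := by field_simp
      calc (n:ℝ) * (β / n + t / Real.sqrt n)
          = (n:ℝ) * (β / n) + (n:ℝ) * (t / Real.sqrt n) := by ring
        _ = β + Real.sqrt n * t := by rw [hts, hb2]
    linarith
  -- Chernoff bound
  set θ : ℝ := t / (2 * (1 + β) * Real.sqrt n) with hθdef
  have hθ0 : 0 ≤ θ := by rw [hθdef]; positivity
  have hc2 : (0:ℝ) ≤ 2 + 2 * β := by linarith
  have hexpeq : (n:ℝ) * (2 + 2 * β) * θ ^ 2 / 2 - θ * (Real.sqrt n * t)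
      = -t ^ 2 / (4 * (1 + β)) := by
    obtain ⟨u, hu⟩ : ∃ u, Real.sqrt (n:ℝ) = u := ⟨_, rfl⟩
    have huu : u * u = (n:ℝ) := by rw [← hu]; exact hss
    have hu0 : 0 < u := hu ▸ hsn
    rw [hθdef, hu, ← huu]
    have hu' : u ≠ 0 := ne_of_gt hu0
    have hb' : (1:ℝ) + β ≠ 0 := ne_of_gt hβ1
    field_simp
    ring
  have tailA := tail_bound w g hwpos d hd_anti hd_bd hident (2 + 2 * β) hc2 hgc
    (Real.sqrt n * t) θ hθ0
  have tailB := tail_bound w (fun s => - g s) hwpos (fun i s => - d i s)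
    (fun i s => by rw [hd_anti i s])
    (fun i s => by rw [abs_neg]; exact hd_bd i s)
    (fun s => by
      calc w s * - g s = -(w s * g s) := by ring
        _ = -(∑ i, w s * w (flp i s) / (w s + w (flp i s)) * d i s) := by rw [hident s]
        _ = ∑ i, w s * w (flp i s) / (w s + w (flp i s)) * - d i s := by
            rw [← Finset.sum_neg_distrib]
            apply Finset.sum_congr rfl
            intro i _; ring)
    (2 + 2 * β) hc2
    (fun i s => by
      rw [show - g s - - g (flp i s) = -(g s - g (flp i s)) by ring, abs_neg]
      exact hgc i s)
    (Real.sqrt n * t) θ hθ0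
  rw [hexpeq] at tailA tailB
  set Z := ∑ s : Fin n → Bool, w s with hZ
  have hZpos : 0 < Z := Finset.sum_pos (fun s _ => hwpos s) Finset.univ_nonempty
  set A := Finset.univ.filter (fun s : Fin n → Bool => Real.sqrt n * t ≤ g s) with hA
  set B := Finset.univ.filter (fun s : Fin n → Bool => Real.sqrt n * t ≤ - g s) with hB
  have hEsub : (Finset.univ.filter
      (fun s : Fin n → Bool =>
        β / n + t / Real.sqrt n ≤ |m s - Real.tanh (β * m s + β * h)|)) ⊆ A ∪ B := by
    intro s hsE
    have hpred := (Finset.mem_filter.1 hsE).2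
    have := hev s hpred
    rcases le_abs.1 this with hcase | hcase
    · exact Finset.mem_union_left _ (Finset.mem_filter.2 ⟨Finset.mem_univ _, hcase⟩)
    · exact Finset.mem_union_right _ (Finset.mem_filter.2 ⟨Finset.mem_univ _, hcase⟩)
  have hsum1 : (∑ s ∈ Finset.univ.filter
      (fun s : Fin n → Bool =>
        β / n + t / Real.sqrt n ≤ |m s - Real.tanh (β * m s + β * h)|), w s)
      ≤ ∑ s ∈ A ∪ B, w s :=
    Finset.sum_le_sum_of_subset_of_nonneg hEsub (fun s _ _ => (hwpos s).le)
  have hsum2 : (∑ s ∈ A ∪ B, w s) ≤ (∑ s ∈ A, w s) + (∑ s ∈ B, w s) := by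
    have hui := Finset.sum_union_inter (s₁ := A) (s₂ := B) (f := w)
    have hint : 0 ≤ ∑ s ∈ A ∩ B, w s := Finset.sum_nonneg (fun s _ => (hwpos s).le)
    linarith
  have hfinal : (∑ s ∈ Finset.univ.filter
      (fun s : Fin n → Bool =>
        β / n + t / Real.sqrt n ≤ |m s - Real.tanh (β * m s + β * h)|), w s)
      ≤ 2 * Real.exp (-t ^ 2 / (4 * (1 + β))) * Z := by
    calc (∑ s ∈ Finset.univ.filter
        (fun s : Fin n → Bool =>
          β / n + t / Real.sqrt n ≤ |m s - Real.tanh (β * m s + β * h)|), w s)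
        ≤ ∑ s ∈ A ∪ B, w s := hsum1
      _ ≤ (∑ s ∈ A, w s) + (∑ s ∈ B, w s) := hsum2
      _ ≤ Z * Real.exp (-t ^ 2 / (4 * (1 + β))) + Z * Real.exp (-t ^ 2 / (4 * (1 + β))) := by
          exact add_le_add tailA tailB
      _ = 2 * Real.exp (-t ^ 2 / (4 * (1 + β))) * Z := by ring
  rw [div_le_iff₀ hZpos]
  exact hfinal
end

section
/- Let G = (V, E) be a graph on V = {1, …, n} with maximum degree r, fix β ≥ 0, and let σ be drawn from the Ising Gibbs measure P({σ}) = Z(β)^{-1} exp(β Σ_{{i,j} ∈ E} σ_i σ_j) on {-1,1}^n. For each i let m_i := Σ_{j : {i,j} ∈ E} σ_j, and for u ≥ 0 define S(u) := (1/n) Σ_{i=1}^n (σ_i - tanh(u m_i))². Then for every fixed u ≥ 0 and every t ≥ 0, P(S(β) ≥ S(u) + t) ≤ exp(-n t² / (128 (r + 1))). -/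
open Finset


private lemma chord (x y : ℝ) (hy : |y| ≤ 8) :
    Real.exp (x * y) ≤ (8 - y) / 16 * Real.exp (-(8 * x)) + (8 + y) / 16 * Real.exp (8 * x) := by
  obtain ⟨h1, h2⟩ := abs_le.mp hy
  have := convexOn_exp.2 (Set.mem_univ (-(8*x))) (Set.mem_univ (8*x))
    (by linarith : (0:ℝ) ≤ (8 - y)/16) (by linarith : (0:ℝ) ≤ (8 + y)/16) (by ring)
  have he : (8 - y)/16 * (-(8*x)) + (8 + y)/16 * (8*x) = x * y := by ring
  rw [smul_eq_mul, smul_eq_mul, smul_eq_mul, smul_eq_mul, he] at this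
  exact this

private lemma two_point (a b t : ℝ) (ha : |a| ≤ 1) (hb : |b| ≤ 1) (ht : 0 ≤ t) :
    (1+a)/2 * Real.exp (t * ((1-a)^2 - (1-b)^2)) + (1-a)/2 * Real.exp (t * ((1+a)^2 - (1+b)^2))
      ≤ Real.exp (32 * t^2) := by
  obtain ⟨ha1, ha2⟩ := abs_le.mp ha
  obtain ⟨hb1, hb2⟩ := abs_le.mp hb
  set y : ℝ := -2*(1-a)*(a-b) with hy
  set z : ℝ := 2*(1+a)*(a-b) with hz
  have hμ : t * (-(a-b)^2) ≤ 0 := by nlinarith [sq_nonneg (a-b)]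
  have e1 : t * ((1-a)^2 - (1-b)^2) = t * (-(a-b)^2) + t * y := by rw [hy]; ring
  have e2 : t * ((1+a)^2 - (1+b)^2) = t * (-(a-b)^2) + t * z := by rw [hz]; ring
  rw [e1, e2, Real.exp_add, Real.exp_add]
  have hya : |y| ≤ 8 := by rw [abs_le]; constructor <;> nlinarith
  have hza : |z| ≤ 8 := by rw [abs_le]; constructor <;> nlinarith
  have c1 := chord t y hya
  have c2 := chord t z hza
  have hp1 : (0:ℝ) ≤ (1+a)/2 := by linarith
  have hp2 : (0:ℝ) ≤ (1-a)/2 := by linarith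
  have key : (1+a)/2 * Real.exp (t*y) + (1-a)/2 * Real.exp (t*z)
      ≤ Real.cosh (8*t) := by
    have := add_le_add (mul_le_mul_of_nonneg_left c1 hp1) (mul_le_mul_of_nonneg_left c2 hp2)
    rw [Real.cosh_eq]
    have hcoef : (1+a)/2 * ((8 - y) / 16 * Real.exp (-(8 * t)) + (8 + y) / 16 * Real.exp (8 * t))
        + (1-a)/2 * ((8 - z) / 16 * Real.exp (-(8 * t)) + (8 + z) / 16 * Real.exp (8 * t))
        = (Real.exp (8*t) + Real.exp (-(8*t))) / 2 := by
      rw [hy, hz]; ring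
    linarith
  have hcosh : Real.cosh (8*t) ≤ Real.exp (32 * t^2) := by
    have := Real.cosh_le_exp_half_sq (8*t)
    simpa [show (8*t)^2/2 = 32 * t^2 by ring] using this
  have hexpμ : Real.exp (t * (-(a-b)^2)) ≤ 1 := Real.exp_le_one_iff.mpr hμ
  calc (1+a)/2 * (Real.exp (t * (-(a-b)^2)) * Real.exp (t*y))
      + (1-a)/2 * (Real.exp (t * (-(a-b)^2)) * Real.exp (t*z))
      = Real.exp (t * (-(a-b)^2)) * ((1+a)/2 * Real.exp (t*y) + (1-a)/2 * Real.exp (t*z)) := by ring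
    _ ≤ 1 * Real.exp (32 * t^2) := by
        apply mul_le_mul hexpμ (key.trans hcosh) ?_ zero_le_one
        positivity
    _ = Real.exp (32 * t^2) := one_mul _

private lemma tanh_formula (c : ℝ) :
    Real.tanh c = (Real.exp c - Real.exp (-c)) / (Real.exp c + Real.exp (-c)) := by
  rw [Real.tanh_eq_sinh_div_cosh, Real.sinh_eq, Real.cosh_eq]
  have h : (0:ℝ) < Real.exp c + Real.exp (-c) := by positivity
  field_simp

private lemma abs_tanh_le_one (c : ℝ) : |Real.tanh c| ≤ 1 := by
  rw [tanh_formula, abs_div]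
  have h1 : 0 < Real.exp c := Real.exp_pos _
  have h2 : 0 < Real.exp (-c) := Real.exp_pos _
  rw [div_le_one (by positivity)]
  rw [abs_of_pos (by positivity : (0:ℝ) < Real.exp c + Real.exp (-c))] at *
  rw [abs_le]; constructor <;> linarith

private lemma site_bound (c d t : ℝ) (ht : 0 ≤ t) :
    Real.exp c * Real.exp (t * ((1 - Real.tanh c)^2 - (1 - Real.tanh d)^2))
    + Real.exp (-c) * Real.exp (t * ((-1 - Real.tanh c)^2 - (-1 - Real.tanh d)^2))
    ≤ Real.exp (32*t^2) * (Real.exp c + Real.exp (-c)) := by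
  set a := Real.tanh c with hA
  set b := Real.tanh d with hB
  have hE : (0:ℝ) < Real.exp c + Real.exp (-c) := by positivity
  have htc : a = (Real.exp c - Real.exp (-c)) / (Real.exp c + Real.exp (-c)) := tanh_formula c
  have hpc : Real.exp c = (1 + a)/2 * (Real.exp c + Real.exp (-c)) := by
    rw [htc]; field_simp; ring
  have hnc : Real.exp (-c) = (1 - a)/2 * (Real.exp c + Real.exp (-c)) := by
    rw [htc]; field_simp; ring
  have he2 : ((-1:ℝ) - a)^2 - (-1 - b)^2 = (1+a)^2 - (1+b)^2 := by ring
  have he1 : ((1:ℝ) - a)^2 - (1 - b)^2 = (1-a)^2 - (1-b)^2 := by ring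
  rw [he2, he1]
  have h2p := two_point a b t (abs_tanh_le_one c) (abs_tanh_le_one d) ht
  calc Real.exp c * Real.exp (t * ((1-a)^2 - (1-b)^2))
      + Real.exp (-c) * Real.exp (t * ((1+a)^2 - (1+b)^2))
      = ((1+a)/2 * Real.exp (t * ((1-a)^2 - (1-b)^2))
        + (1-a)/2 * Real.exp (t * ((1+a)^2 - (1+b)^2))) * (Real.exp c + Real.exp (-c)) := by
        linear_combination Real.exp (t * ((1-a)^2 - (1-b)^2)) * hpc
          + Real.exp (t * ((1+a)^2 - (1+b)^2)) * hnc
    _ ≤ Real.exp (32*t^2) * (Real.exp c + Real.exp (-c)) :=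
        mul_le_mul_of_nonneg_right h2p hE.le

private lemma exists_coloring (n r : ℕ) (G : SimpleGraph (Fin n)) [DecidableRel G.Adj]
    (hdeg : ∀ v, G.degree v ≤ r) :
    ∃ κ : Fin n → Fin (r+1), ∀ i j : Fin n, G.Adj i j → κ i ≠ κ j := by
  suffices h : ∀ k : ℕ, k ≤ n → ∃ κ : Fin n → Fin (r+1),
      ∀ i j : Fin n, i < j → (j:ℕ) < k → G.Adj i j → κ i ≠ κ j by
    obtain ⟨κ, hκ⟩ := h n le_rfl
    refine ⟨κ, fun i j hadj => ?_⟩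
    rcases lt_trichotomy i j with h' | h' | h'
    · exact hκ i j h' j.isLt hadj
    · exact absurd (h' ▸ hadj) (G.loopless.irrefl i)
    · exact (hκ j i h' i.isLt hadj.symm).symm
  intro k
  induction k with
  | zero =>
    exact fun _ => ⟨fun _ => ⟨0, Nat.succ_pos r⟩, fun i j _ hj _ => absurd hj (Nat.not_lt_zero _)⟩
  | succ k ih =>
    intro hk
    obtain ⟨κ, hκ⟩ := ih (Nat.le_of_succ_le hk)
    have hkn : k < n := hk
    set v : Fin n := ⟨k, hkn⟩ with hv
    set used : Finset (Fin (r+1)) := ((G.neighborFinset v).filter (fun j => j < v)).image κ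
      with hused
    have hcard : used.card < Fintype.card (Fin (r+1)) := by
      calc used.card ≤ ((G.neighborFinset v).filter (fun j => j < v)).card :=
            Finset.card_image_le
        _ ≤ (G.neighborFinset v).card := Finset.card_filter_le _ _
        _ = G.degree v := rfl
        _ ≤ r := hdeg v
        _ < r + 1 := Nat.lt_succ_self r
        _ = Fintype.card (Fin (r+1)) := (Fintype.card_fin _).symm
    obtain ⟨c, hc⟩ : ∃ c, c ∉ used := by
      by_contra h
      push_neg at h
      have : used = Finset.univ := Finset.eq_univ_iff_forall.mpr h
      rw [this, Finset.card_univ] at hcard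
      exact lt_irrefl _ hcard
    refine ⟨Function.update κ v c, fun i j hij hjk hadj => ?_⟩
    have hijn : (i:ℕ) < (j:ℕ) := hij
    have hjk' : (j:ℕ) < k + 1 := hjk
    have hiv : i ≠ v := by
      intro h
      have : (i:ℕ) = k := by rw [h]
      omega
    rw [Function.update_of_ne hiv]
    rcases Nat.lt_or_ge (j:ℕ) k with hj | hj
    · have hjv : j ≠ v := by
        intro h
        have : (j:ℕ) = k := by rw [h]
        omega
      rw [Function.update_of_ne hjv]
      exact hκ i j hij hj hadj
    · have hjv : j = v := by
        apply Fin.ext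
        show (j:ℕ) = k
        omega
      subst hjv
      rw [Function.update_self]
      intro heq
      apply hc
      rw [hused, ← heq]
      apply Finset.mem_image_of_mem
      rw [Finset.mem_filter, SimpleGraph.mem_neighborFinset]
      exact ⟨hadj.symm, hij⟩

private lemma esum_flip (n : ℕ) (G : SimpleGraph (Fin n)) [DecidableRel G.Adj]
    (σ : (Fin n → Bool) → Fin n → ℝ) (hσ : ∀ s i, σ s i = if s i then 1 else -1)
    (s : Fin n → Bool) (i : Fin n) :
    ∑ p ∈ Finset.univ.filter (fun p : Fin n × Fin n => G.Adj p.1 p.2 ∧ p.1 < p.2),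
        σ (Function.update s i true) p.1 * σ (Function.update s i true) p.2
    - ∑ p ∈ Finset.univ.filter (fun p : Fin n × Fin n => G.Adj p.1 p.2 ∧ p.1 < p.2),
        σ (Function.update s i false) p.1 * σ (Function.update s i false) p.2
    = 2 * ∑ j ∈ G.neighborFinset i, σ s j := by
  classical
  set P := Finset.univ.filter (fun p : Fin n × Fin n => G.Adj p.1 p.2 ∧ p.1 < p.2) with hP
  have hσu : ∀ (b : Bool) (j : Fin n), j ≠ i → σ (Function.update s i b) j = σ s j := by
    intro b j hj
    rw [hσ, hσ, Function.update_of_ne hj]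
  have hσT : σ (Function.update s i true) i = 1 := by
    rw [hσ, Function.update_self]; simp
  have hσF : σ (Function.update s i false) i = -1 := by
    rw [hσ, Function.update_self]; simp
  rw [← Finset.sum_sub_distrib]
  set d : Fin n × Fin n → ℝ := fun p =>
    σ (Function.update s i true) p.1 * σ (Function.update s i true) p.2
    - σ (Function.update s i false) p.1 * σ (Function.update s i false) p.2 with hd
  rw [← Finset.sum_filter_add_sum_filter_not P (fun p => p.1 = i) d]
  rw [← Finset.sum_filter_add_sum_filter_not (P.filter (fun p => ¬ p.1 = i))
    (fun p => p.2 = i) d]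
  have hzero : ∑ p ∈ (P.filter (fun p => ¬ p.1 = i)).filter (fun p => ¬ p.2 = i), d p = 0 := by
    apply Finset.sum_eq_zero
    intro p hp
    rw [Finset.mem_filter] at hp
    obtain ⟨hp1, hp2⟩ := hp
    rw [Finset.mem_filter] at hp1
    rw [hd]
    simp only
    rw [hσu _ _ hp1.2, hσu _ _ hp1.2, hσu _ _ hp2, hσu _ _ hp2]
    ring
  have hfirst : ∑ p ∈ P.filter (fun p => p.1 = i), d p
      = ∑ j ∈ (G.neighborFinset i).filter (fun j => i < j), 2 * σ s j := by
    apply Finset.sum_nbij' (i := fun p => p.2) (j := fun j => (i, j))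
    · intro p hp
      rw [Finset.mem_filter] at hp
      obtain ⟨hp1, hp2⟩ := hp
      rw [hP, Finset.mem_filter] at hp1
      rw [Finset.mem_filter, SimpleGraph.mem_neighborFinset]
      rw [← hp2]
      exact ⟨hp1.2.1, hp1.2.2⟩
    · intro j hj
      rw [Finset.mem_filter, SimpleGraph.mem_neighborFinset] at hj
      rw [Finset.mem_filter, hP, Finset.mem_filter]
      exact ⟨⟨Finset.mem_univ _, hj.1, hj.2⟩, rfl⟩
    · intro p hp
      rw [Finset.mem_filter] at hp
      rw [← hp.2]
    · intro j _
      rfl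
    · intro p hp
      rw [Finset.mem_filter] at hp
      obtain ⟨hp1, hp2⟩ := hp
      rw [hP, Finset.mem_filter] at hp1
      have hne : p.2 ≠ i := by
        intro h
        have hlt : p.1 < p.2 := hp1.2.2
        rw [hp2, h] at hlt
        exact lt_irrefl _ hlt
      rw [hd]
      simp only
      rw [hp2, hσT, hσF, hσu true _ hne, hσu false _ hne]
      ring
  have hsecond : ∑ p ∈ (P.filter (fun p => ¬ p.1 = i)).filter (fun p => p.2 = i), d p
      = ∑ j ∈ (G.neighborFinset i).filter (fun j => j < i), 2 * σ s j := by
    apply Finset.sum_nbij' (i := fun p => p.1) (j := fun j => (j, i))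
    · intro p hp
      rw [Finset.mem_filter] at hp
      obtain ⟨hp1, hp2⟩ := hp
      rw [Finset.mem_filter] at hp1
      obtain ⟨hp1, _⟩ := hp1
      rw [hP, Finset.mem_filter] at hp1
      rw [Finset.mem_filter, SimpleGraph.mem_neighborFinset]
      rw [← hp2]
      exact ⟨hp1.2.1.symm, hp1.2.2⟩
    · intro j hj
      rw [Finset.mem_filter, SimpleGraph.mem_neighborFinset] at hj
      rw [Finset.mem_filter, Finset.mem_filter, hP, Finset.mem_filter]
      refine ⟨⟨⟨Finset.mem_univ _, hj.1.symm, hj.2⟩, ?_⟩, rfl⟩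
      intro h
      simp only at h
      rw [h] at hj
      exact lt_irrefl _ hj.2
    · intro p hp
      rw [Finset.mem_filter] at hp
      rw [← hp.2]
    · intro j _
      rfl
    · intro p hp
      rw [Finset.mem_filter] at hp
      obtain ⟨hp1, hp2⟩ := hp
      rw [Finset.mem_filter] at hp1
      obtain ⟨_, hne⟩ := hp1
      rw [hd]
      simp only
      rw [hp2, hσT, hσF, hσu true _ hne, hσu false _ hne]
      ring
  rw [hzero, add_zero, hfirst, hsecond]
  have hsetseq : (G.neighborFinset i).filter (fun j => j < i)
      = (G.neighborFinset i).filter (fun j => ¬ i < j) := by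
    apply Finset.filter_congr
    intro j hj
    rw [SimpleGraph.mem_neighborFinset] at hj
    have hne : j ≠ i := fun h => G.loopless.irrefl i (h ▸ hj)
    simp only [not_lt, eq_iff_iff]
    exact ⟨le_of_lt, fun h => lt_of_le_of_ne h hne⟩
  rw [hsetseq, Finset.sum_filter_add_sum_filter_not, Finset.mul_sum]

private lemma sum_split (n : ℕ) (i : Fin n) (F : (Fin n → Bool) → ℝ) :
    ∑ s : Fin n → Bool, F s
    = ∑ s ∈ Finset.univ.filter (fun s : Fin n → Bool => s i = false),
        (F s + F (Function.update s i true)) := by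
  rw [Finset.sum_add_distrib]
  rw [← Finset.sum_filter_add_sum_filter_not Finset.univ (fun s : Fin n → Bool => s i = false) F]
  congr 1
  apply Finset.sum_nbij' (i := fun s => Function.update s i false)
    (j := fun s => Function.update s i true)
  · intro a _
    simp [Finset.mem_filter]
  · intro a _
    simp [Finset.mem_filter]
  · intro a ha
    simp only [Finset.mem_filter, Finset.mem_univ, true_and] at ha
    have hat : a i = true := by
      cases h : a i
      · exact absurd h ha
      · rfl
    rw [Function.update_idem]
    conv_rhs => rw [← Function.update_eq_self i a]
    rw [hat]
  · intro a ha
    simp only [Finset.mem_filter, Finset.mem_univ, true_and] at ha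
    rw [Function.update_idem]
    conv_rhs => rw [← Function.update_eq_self i a]
    rw [ha]
  · intro a ha
    simp only [Finset.mem_filter, Finset.mem_univ, true_and] at ha
    have hat : a i = true := by
      cases h : a i
      · exact absurd h ha
      · rfl
    congr 1
    rw [Function.update_idem]
    conv_lhs => rw [← Function.update_eq_self i a]
    rw [hat]

private lemma peel (n : ℕ) (i : Fin n)
    (W : (Fin n → Bool) → ℝ) (hWpos : ∀ s, 0 < W s)
    (c d : (Fin n → Bool) → ℝ)
    (hc : ∀ s b, c (Function.update s i b) = c s)
    (hd : ∀ s b, d (Function.update s i b) = d s)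
    (hW : ∀ s, W (Function.update s i true) * Real.exp (-(c s))
      = W (Function.update s i false) * Real.exp (c s))
    (gi : (Fin n → Bool) → ℝ)
    (hg : ∀ s, gi s = ((if s i then (1:ℝ) else -1) - Real.tanh (c s))^2
      - ((if s i then (1:ℝ) else -1) - Real.tanh (d s))^2)
    (h : (Fin n → Bool) → ℝ) (hh : ∀ s, 0 ≤ h s)
    (hhinv : ∀ s b, h (Function.update s i b) = h s)
    (t : ℝ) (ht : 0 ≤ t) :
    ∑ s : Fin n → Bool, W s * Real.exp (t * gi s) * h s
      ≤ Real.exp (32*t^2) * ∑ s : Fin n → Bool, W s * h s := by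
  rw [sum_split n i (fun s => W s * Real.exp (t * gi s) * h s),
      sum_split n i (fun s => W s * h s), Finset.mul_sum]
  apply Finset.sum_le_sum
  intro s hs
  rw [Finset.mem_filter] at hs
  have hsf : Function.update s i false = s := by
    conv_rhs => rw [← Function.update_eq_self i s]
    rw [hs.2]
  have hWrel : W (Function.update s i true) * Real.exp (-(c s)) = W s * Real.exp (c s) := by
    have := hW s
    rw [hsf] at this
    exact this
  have hgT : gi (Function.update s i true)
      = (1 - Real.tanh (c s))^2 - (1 - Real.tanh (d s))^2 := by
    rw [hg, Function.update_self, hc, hd]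
    simp
  have hgF : gi s = (-1 - Real.tanh (c s))^2 - (-1 - Real.tanh (d s))^2 := by
    rw [hg, hs.2]
    simp
  have hhT : h (Function.update s i true) = h s := hhinv s true
  have hWT : W (Function.update s i true) = W s * Real.exp (c s) * Real.exp (c s) := by
    rw [Real.exp_neg] at hWrel
    field_simp at hWrel
    linarith [hWrel]
  rw [hgT, hgF, hhT, hWT]
  set X := Real.exp (c s) with hXdef
  set Y := Real.exp (-(c s)) with hYdef
  set K := Real.exp (32*t^2) with hKdef
  set E1 := Real.exp (t * ((1 - Real.tanh (c s))^2 - (1 - Real.tanh (d s))^2)) with hE1def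
  set E2 := Real.exp (t * ((-1 - Real.tanh (c s))^2 - (-1 - Real.tanh (d s))^2)) with hE2def
  have key : X * E1 + Y * E2 ≤ K * (X + Y) := site_bound (c s) (d s) t ht
  have hXY : X * Y = 1 := by
    rw [hXdef, hYdef, ← Real.exp_add]
    simp
  have hXpos : (0:ℝ) < X := Real.exp_pos _
  have hE2pos : (0:ℝ) < E2 := Real.exp_pos _
  have hKpos : (0:ℝ) < K := Real.exp_pos _
  have key2 := mul_le_mul_of_nonneg_left key
    (mul_nonneg (mul_nonneg (hWpos s).le (hh s)) hXpos.le)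
  have e1 : W s * h s * E2 * (X * Y) = W s * h s * E2 := by rw [hXY]; ring
  have e2 : K * (W s * h s) * (X * Y) = K * (W s * h s) := by rw [hXY]; ring
  nlinarith [key2, e1, e2]

private lemma class_bound (n : ℕ)
    (W : (Fin n → Bool) → ℝ) (g : (Fin n → Bool) → Fin n → ℝ) (t : ℝ) :
    ∀ C : Finset (Fin n),
    (∀ i ∈ C, ∀ h : (Fin n → Bool) → ℝ, (∀ s, 0 ≤ h s) →
      (∀ s b, h (Function.update s i b) = h s) →
      ∑ s : Fin n → Bool, W s * Real.exp (t * g s i) * h s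
        ≤ Real.exp (32*t^2) * ∑ s : Fin n → Bool, W s * h s) →
    (∀ i ∈ C, ∀ j ∈ C, j ≠ i → ∀ s b, g (Function.update s i b) j = g s j) →
    ∑ s : Fin n → Bool, W s * Real.exp (t * ∑ i ∈ C, g s i)
      ≤ Real.exp (32*t^2*C.card) * ∑ s : Fin n → Bool, W s := by
  intro C
  induction C using Finset.induction_on with
  | empty => intro _ _; simp
  | @insert a C' ha ih =>
    intro hpeel hginv
    have hinv : ∀ (s : Fin n → Bool) (b : Bool),
        Real.exp (t * ∑ i ∈ C', g (Function.update s a b) i)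
        = Real.exp (t * ∑ i ∈ C', g s i) := by
      intro s b
      congr 1
      congr 1
      apply Finset.sum_congr rfl
      intro j hj
      exact hginv a (Finset.mem_insert_self a C') j (Finset.mem_insert_of_mem hj)
        (fun h => ha (h ▸ hj)) s b
    have hstep : ∑ s : Fin n → Bool, W s * Real.exp (t * ∑ i ∈ insert a C', g s i)
        ≤ Real.exp (32*t^2) * ∑ s : Fin n → Bool,
            W s * Real.exp (t * ∑ i ∈ C', g s i) := by
      have h1 := hpeel a (Finset.mem_insert_self a C')
        (fun s => Real.exp (t * ∑ i ∈ C', g s i))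
        (fun s => (Real.exp_pos _).le) hinv
      calc ∑ s : Fin n → Bool, W s * Real.exp (t * ∑ i ∈ insert a C', g s i)
          = ∑ s : Fin n → Bool, W s * Real.exp (t * g s a)
              * Real.exp (t * ∑ i ∈ C', g s i) := by
            apply Finset.sum_congr rfl
            intro s _
            rw [Finset.sum_insert ha, mul_add, Real.exp_add, ← mul_assoc]
        _ ≤ _ := h1
    have hih := ih (fun i hi => hpeel i (Finset.mem_insert_of_mem hi))
      (fun i hi j hj hne => hginv i (Finset.mem_insert_of_mem hi) j
        (Finset.mem_insert_of_mem hj) hne)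
    calc ∑ s : Fin n → Bool, W s * Real.exp (t * ∑ i ∈ insert a C', g s i)
        ≤ Real.exp (32*t^2) * ∑ s : Fin n → Bool,
            W s * Real.exp (t * ∑ i ∈ C', g s i) := hstep
      _ ≤ Real.exp (32*t^2) * (Real.exp (32*t^2*C'.card) * ∑ s : Fin n → Bool, W s) :=
          mul_le_mul_of_nonneg_left hih (Real.exp_pos _).le
      _ = Real.exp (32*t^2*(insert a C').card) * ∑ s : Fin n → Bool, W s := by
          rw [← mul_assoc, ← Real.exp_add, Finset.card_insert_of_notMem ha]
          congr 2
          push_cast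
          ring

/-- **Tail bound (2.2) for the least-squares criterion in the Ising model.**
For the Ising model `P({σ}) ∝ exp(β ∑_{{i,j}∈E} σ_i σ_j)` on a graph `G` on `{1,…,n}`
with maximum degree `r`, local fields `mᵢ = ∑_{j ∼ i} σ_j` and
`S(u) = (1/n) ∑ i, (σ_i - tanh(u mᵢ))²`, for every fixed `u ≥ 0` and `t ≥ 0` one has
`P(S(β) ≥ S(u) + t) ≤ exp(-n t²/(128(r+1)))`. Configurations are encoded by
`s : Fin n → Bool` with spins `σ s i = ±1`, and the probability of an event is its
Gibbs weight divided by the total weight. -/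
theorem ising_least_squares_tail_bound
    (n : ℕ) (hn : 1 ≤ n)
    (G : SimpleGraph (Fin n)) [DecidableRel G.Adj] (r : ℕ) (hr : G.maxDegree = r)
    (β : ℝ) (hβ : 0 ≤ β)
    (σ : (Fin n → Bool) → Fin n → ℝ)
    (hσ : ∀ s i, σ s i = if s i then 1 else -1)
    (w : (Fin n → Bool) → ℝ)
    (hw : ∀ s, w s = Real.exp (β *
      ∑ p ∈ Finset.univ.filter (fun p : Fin n × Fin n => G.Adj p.1 p.2 ∧ p.1 < p.2),
        σ s p.1 * σ s p.2))
    (mi : (Fin n → Bool) → Fin n → ℝ)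
    (hmi : ∀ s i, mi s i = ∑ j ∈ G.neighborFinset i, σ s j)
    (S : (Fin n → Bool) → ℝ → ℝ)
    (hS : ∀ s u, S s u = (1 / n) * ∑ i, (σ s i - Real.tanh (u * mi s i)) ^ 2)
    (u : ℝ) (hu : 0 ≤ u) (t : ℝ) (ht : 0 ≤ t) :
    (∑ s ∈ Finset.univ.filter (fun s : Fin n → Bool => S s u + t ≤ S s β), w s)
      / (∑ s : Fin n → Bool, w s)
      ≤ Real.exp (-(n * t ^ 2) / (128 * (r + 1))) := by
  classical
  have hwpos : ∀ s, 0 < w s := fun s => by rw [hw]; exact Real.exp_pos _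
  have hZpos : (0:ℝ) < ∑ s : Fin n → Bool, w s :=
    Finset.sum_pos (fun s _ => hwpos s) Finset.univ_nonempty
  have hnR : (0:ℝ) < (n:ℝ) := by exact_mod_cast hn
  set m0 : ℕ := r + 1 with hm0
  have hm0R : (0:ℝ) < (m0:ℝ) := by positivity
  -- the coloring
  have hdeg : ∀ v, G.degree v ≤ r := fun v => hr ▸ G.degree_le_maxDegree v
  obtain ⟨κ, hκ⟩ := exists_coloring n r G hdeg
  -- per-vertex functions
  set g : (Fin n → Bool) → Fin n → ℝ := fun s i =>
    ((if s i then (1:ℝ) else -1) - Real.tanh (β * mi s i))^2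
    - ((if s i then (1:ℝ) else -1) - Real.tanh (u * mi s i))^2 with hgdef
  set lam : ℝ := t / (64 * (m0:ℝ)) with hlam
  have hlam0 : 0 ≤ lam := by positivity
  set t' : ℝ := lam * (m0:ℝ) with ht'
  have ht'0 : 0 ≤ t' := by positivity
  -- invariance of mi under flips at non-neighbors
  have hmiupd : ∀ (s : Fin n → Bool) (i j : Fin n) (b : Bool), ¬ G.Adj j i →
      mi (Function.update s i b) j = mi s j := by
    intro s i j b hadj
    rw [hmi, hmi]
    apply Finset.sum_congr rfl
    intro k hk
    rw [SimpleGraph.mem_neighborFinset] at hk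
    have hki : k ≠ i := fun h => hadj (h ▸ hk)
    rw [hσ, hσ, Function.update_of_ne hki]
  -- Gibbs single-site relation
  have hWflip : ∀ (i : Fin n) (s : Fin n → Bool),
      w (Function.update s i true) * Real.exp (-(β * mi s i))
      = w (Function.update s i false) * Real.exp (β * mi s i) := by
    intro i s
    rw [hw, hw, ← Real.exp_add, ← Real.exp_add]
    congr 1
    have hE := esum_flip n G σ hσ s i
    rw [hmi]
    linear_combination β * hE
  -- g invariance
  have hginv : ∀ (i j : Fin n), j ≠ i → ¬ G.Adj j i → ∀ (s : Fin n → Bool) (b : Bool),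
      g (Function.update s i b) j = g s j := by
    intro i j hne hadj s b
    rw [hgdef]
    simp only
    rw [Function.update_of_ne hne, hmiupd s i j b hadj]
  -- the class bound instantiated
  have hclass : ∀ c : Fin m0,
      ∑ s : Fin n → Bool, w s * Real.exp (t' * ∑ i ∈ univ.filter (fun i => κ i = c), g s i)
      ≤ Real.exp (32*t'^2 * ((univ.filter (fun i : Fin n => κ i = c)).card))
        * ∑ s : Fin n → Bool, w s := by
    intro c
    apply class_bound n w g t' (univ.filter (fun i => κ i = c))
    · intro i _ h hh hhinv
      exact peel n i w hwpos (fun s => β * mi s i) (fun s => u * mi s i)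
        (fun s b => by
          show β * mi (Function.update s i b) i = β * mi s i
          rw [hmiupd s i i b (G.loopless.irrefl i)])
        (fun s b => by
          show u * mi (Function.update s i b) i = u * mi s i
          rw [hmiupd s i i b (G.loopless.irrefl i)])
        (fun s => hWflip i s)
        (fun s => g s i) (fun s => by simp only [hgdef])
        h hh hhinv t' ht'0
    · intro i hi j hj hne s b
      rw [Finset.mem_filter] at hi hj
      have hnadj : ¬ G.Adj j i := fun hadj => hκ j i hadj (by rw [hi.2, hj.2])
      exact hginv i j hne hnadj s b
  -- abbreviations
  set Z : ℝ := ∑ s : Fin n → Bool, w s with hZdef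
  set Zc : Fin m0 → ℝ := fun c => ∑ s : Fin n → Bool,
    w s * Real.exp (t' * ∑ i ∈ univ.filter (fun i => κ i = c), g s i) with hZcdef
  have hZceq : ∀ c : Fin m0, ∑ s : Fin n → Bool,
      w s * Real.exp (t' * ∑ i ∈ univ.filter (fun i => κ i = c), g s i) = Zc c :=
    fun c => by rw [hZcdef]
  have hZcpos : ∀ c, 0 < Zc c := fun c => by
    rw [← hZceq c]
    exact Finset.sum_pos (fun s _ => mul_pos (hwpos s) (Real.exp_pos _)) Finset.univ_nonempty
  set L : ℝ := (1/(m0:ℝ)) * ∑ c : Fin m0, Real.log (Zc c) with hLdef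
  have hsum1 : ∑ _c : Fin m0, (1/(m0:ℝ)) = 1 := by
    rw [Finset.sum_const, Finset.card_univ, Fintype.card_fin, nsmul_eq_mul]
    field_simp
  have hfib : ∀ s, ∑ c : Fin m0, ∑ i ∈ univ.filter (fun i => κ i = c), g s i
      = ∑ i, g s i := fun s => Finset.sum_fiberwise univ κ (g s)
  have h1m : (1/(m0:ℝ)) * t' = lam := by
    rw [ht']
    field_simp
  -- Jensen pointwise
  have hJ : ∀ s, Real.exp (lam * ∑ i, g s i)
      ≤ Real.exp L * ∑ c : Fin m0, (1/(m0:ℝ)) *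
          (Real.exp (t' * ∑ i ∈ univ.filter (fun i => κ i = c), g s i) / Zc c) := by
    intro s
    have jensen := convexOn_exp.map_sum_le (t := (univ : Finset (Fin m0)))
      (w := fun _ => 1/(m0:ℝ))
      (p := fun c => t' * ∑ i ∈ univ.filter (fun i => κ i = c), g s i - Real.log (Zc c))
      (fun _ _ => by positivity) hsum1 (fun _ _ => Set.mem_univ _)
    simp only [smul_eq_mul] at jensen
    have harg : ∑ c : Fin m0, (1/(m0:ℝ)) *
        (t' * ∑ i ∈ univ.filter (fun i => κ i = c), g s i - Real.log (Zc c))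
        = lam * ∑ i, g s i - L := by
      calc ∑ c : Fin m0, (1/(m0:ℝ)) *
            (t' * ∑ i ∈ univ.filter (fun i => κ i = c), g s i - Real.log (Zc c))
          = ∑ c : Fin m0, (lam * ∑ i ∈ univ.filter (fun i => κ i = c), g s i
              - (1/(m0:ℝ)) * Real.log (Zc c)) := by
            apply Finset.sum_congr rfl
            intro c _
            linear_combination (∑ i ∈ univ.filter (fun i => κ i = c), g s i) * h1m
        _ = lam * ∑ i, g s i - L := by
            rw [Finset.sum_sub_distrib, ← Finset.mul_sum, ← Finset.mul_sum, hfib s, hLdef]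
    rw [harg] at jensen
    have hterm : ∀ c ∈ (univ : Finset (Fin m0)),
        (1/(m0:ℝ)) * Real.exp (t' * ∑ i ∈ univ.filter (fun i => κ i = c), g s i
          - Real.log (Zc c))
        = (1/(m0:ℝ)) * (Real.exp (t' * ∑ i ∈ univ.filter (fun i => κ i = c), g s i)
            / Zc c) := by
      intro c _
      rw [Real.exp_sub, Real.exp_log (hZcpos c)]
    calc Real.exp (lam * ∑ i, g s i)
        = Real.exp L * Real.exp (lam * ∑ i, g s i - L) := by
          rw [← Real.exp_add]
          congr 1
          ring
      _ ≤ Real.exp L * ∑ c : Fin m0, (1/(m0:ℝ)) *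
            (Real.exp (t' * ∑ i ∈ univ.filter (fun i => κ i = c), g s i) / Zc c) :=
          mul_le_mul_of_nonneg_left (jensen.trans_eq (Finset.sum_congr rfl hterm))
            (Real.exp_pos _).le
  -- sum the Jensen bound
  have hM1 : ∑ s : Fin n → Bool, w s * Real.exp (lam * ∑ i, g s i) ≤ Real.exp L := by
    calc ∑ s : Fin n → Bool, w s * Real.exp (lam * ∑ i, g s i)
        ≤ ∑ s : Fin n → Bool, w s * (Real.exp L * ∑ c : Fin m0, (1/(m0:ℝ)) *
            (Real.exp (t' * ∑ i ∈ univ.filter (fun i => κ i = c), g s i) / Zc c)) :=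
          Finset.sum_le_sum (fun s _ => mul_le_mul_of_nonneg_left (hJ s) (hwpos s).le)
      _ = ∑ s : Fin n → Bool, ∑ c : Fin m0, Real.exp L * (1/(m0:ℝ)) *
            (w s * Real.exp (t' * ∑ i ∈ univ.filter (fun i => κ i = c), g s i) / Zc c) := by
          apply Finset.sum_congr rfl
          intro s _
          rw [Finset.mul_sum, Finset.mul_sum]
          apply Finset.sum_congr rfl
          intro c _
          ring
      _ = ∑ c : Fin m0, ∑ s : Fin n → Bool, Real.exp L * (1/(m0:ℝ)) *
            (w s * Real.exp (t' * ∑ i ∈ univ.filter (fun i => κ i = c), g s i) / Zc c) :=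
          Finset.sum_comm
      _ = ∑ c : Fin m0, Real.exp L * (1/(m0:ℝ)) := by
          apply Finset.sum_congr rfl
          intro c _
          rw [← Finset.mul_sum, ← Finset.sum_div, hZceq c, div_self (hZcpos c).ne']
          rw [mul_one]
      _ = Real.exp L := by
          rw [Finset.sum_const, Finset.card_univ, Fintype.card_fin, nsmul_eq_mul]
          field_simp
  -- bound on L
  have hcards : ∑ c : Fin m0, (((univ.filter (fun i : Fin n => κ i = c)).card : ℝ)) = n := by
    have h1 : ∑ c : Fin m0, ((univ.filter (fun i : Fin n => κ i = c)).card)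
        = (univ.filter (fun i : Fin n => κ i ∈ (univ : Finset (Fin m0)))).card :=
      Finset.sum_card_fiberwise_eq_card_filter _ _ _
    have h2 : (univ.filter (fun i : Fin n => κ i ∈ (univ : Finset (Fin m0)))).card = n := by
      simp
    have h3 := h1.trans h2
    exact_mod_cast congrArg (Nat.cast : ℕ → ℝ) h3
  have hLle : L ≤ 32*lam^2*(m0:ℝ)*(n:ℝ) + Real.log Z := by
    have hlog : ∀ c : Fin m0, Real.log (Zc c)
        ≤ 32*t'^2 * (((univ.filter (fun i : Fin n => κ i = c)).card : ℝ)) + Real.log Z := by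
      intro c
      have h1 := hclass c
      rw [hZceq c] at h1
      have h2 := Real.log_le_log (hZcpos c) h1
      rw [Real.log_mul (Real.exp_ne_zero _) hZpos.ne', Real.log_exp] at h2
      exact h2
    calc L ≤ (1/(m0:ℝ)) * ∑ c : Fin m0,
          (32*t'^2 * (((univ.filter (fun i : Fin n => κ i = c)).card : ℝ)) + Real.log Z) := by
          rw [hLdef]
          exact mul_le_mul_of_nonneg_left (Finset.sum_le_sum (fun c _ => hlog c))
            (by positivity)
      _ = (1/(m0:ℝ)) * (32*t'^2 * (n:ℝ) + (m0:ℝ) * Real.log Z) := by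
          rw [Finset.sum_add_distrib, ← Finset.mul_sum, hcards, Finset.sum_const,
            Finset.card_univ, Fintype.card_fin, nsmul_eq_mul]
      _ = 32*lam^2*(m0:ℝ)*(n:ℝ) + Real.log Z := by
          rw [ht']
          field_simp
          try ring
  have hMGF : ∑ s : Fin n → Bool, w s * Real.exp (lam * ∑ i, g s i)
      ≤ Real.exp (32*lam^2*(m0:ℝ)*(n:ℝ)) * Z := by
    calc ∑ s : Fin n → Bool, w s * Real.exp (lam * ∑ i, g s i)
        ≤ Real.exp L := hM1
      _ ≤ Real.exp (32*lam^2*(m0:ℝ)*(n:ℝ) + Real.log Z) := Real.exp_le_exp.mpr hLle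
      _ = Real.exp (32*lam^2*(m0:ℝ)*(n:ℝ)) * Z := by
          rw [Real.exp_add, Real.exp_log hZpos]
  -- Chernoff step
  have hgsum : ∀ s, ∑ i, g s i = (n:ℝ) * S s β - (n:ℝ) * S s u := by
    intro s
    have h1 : ∀ v : ℝ, (n:ℝ) * S s v
        = ∑ i, ((if s i then (1:ℝ) else -1) - Real.tanh (v * mi s i))^2 := by
      intro v
      rw [hS, ← mul_assoc, mul_one_div, div_self hnR.ne', one_mul]
      apply Finset.sum_congr rfl
      intro i _
      rw [hσ]
    rw [h1 β, h1 u, ← Finset.sum_sub_distrib]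
  have hchern : ∑ s ∈ univ.filter (fun s : Fin n → Bool => S s u + t ≤ S s β), w s
      ≤ Real.exp (-(lam * ((n:ℝ)*t)))
        * ∑ s : Fin n → Bool, w s * Real.exp (lam * ∑ i, g s i) := by
    rw [Finset.mul_sum]
    calc ∑ s ∈ univ.filter (fun s : Fin n → Bool => S s u + t ≤ S s β), w s
        ≤ ∑ s ∈ univ.filter (fun s : Fin n → Bool => S s u + t ≤ S s β),
            Real.exp (-(lam * ((n:ℝ)*t))) * (w s * Real.exp (lam * ∑ i, g s i)) := by
          apply Finset.sum_le_sum
          intro s hs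
          rw [Finset.mem_filter] at hs
          have hst : (n:ℝ)*t ≤ ∑ i, g s i := by
            rw [hgsum]
            nlinarith [hs.2, hnR]
          have hone : 1 ≤ Real.exp (-(lam * ((n:ℝ)*t))) * Real.exp (lam * ∑ i, g s i) := by
            rw [← Real.exp_add]
            apply Real.one_le_exp
            nlinarith [mul_le_mul_of_nonneg_left hst hlam0]
          calc w s = w s * 1 := (mul_one _).symm
            _ ≤ w s * (Real.exp (-(lam * ((n:ℝ)*t))) * Real.exp (lam * ∑ i, g s i)) :=
                mul_le_mul_of_nonneg_left hone (hwpos s).le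
            _ = Real.exp (-(lam * ((n:ℝ)*t))) * (w s * Real.exp (lam * ∑ i, g s i)) := by
                ring
      _ ≤ ∑ s : Fin n → Bool,
            Real.exp (-(lam * ((n:ℝ)*t))) * (w s * Real.exp (lam * ∑ i, g s i)) :=
          Finset.sum_le_sum_of_subset_of_nonneg (Finset.filter_subset _ _)
            (fun s _ _ => mul_nonneg (Real.exp_pos _).le
              (mul_nonneg (hwpos s).le (Real.exp_pos _).le))
  -- final combination
  rw [div_le_iff₀ hZpos]
  have hexp_eq : -(lam * ((n:ℝ)*t)) + 32*lam^2*(m0:ℝ)*(n:ℝ)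
      = -((n:ℝ) * t ^ 2) / (128 * ((r:ℝ) + 1)) := by
    have hm0cast : (m0:ℝ) = (r:ℝ) + 1 := by
      rw [hm0]
      push_cast
      ring
    rw [hlam, hm0cast]
    have hrpos : (0:ℝ) < (r:ℝ) + 1 := by positivity
    field_simp
    ring
  calc ∑ s ∈ univ.filter (fun s : Fin n → Bool => S s u + t ≤ S s β), w s
      ≤ Real.exp (-(lam * ((n:ℝ)*t)))
        * ∑ s : Fin n → Bool, w s * Real.exp (lam * ∑ i, g s i) := hchern
    _ ≤ Real.exp (-(lam * ((n:ℝ)*t))) * (Real.exp (32*lam^2*(m0:ℝ)*(n:ℝ)) * Z) :=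
        mul_le_mul_of_nonneg_left hMGF (Real.exp_pos _).le
    _ = Real.exp (-(lam * ((n:ℝ)*t)) + 32*lam^2*(m0:ℝ)*(n:ℝ)) * Z := by
        rw [Real.exp_add]
        ring
    _ = Real.exp (-((n:ℝ) * t ^ 2) / (128 * ((r:ℝ) + 1))) * Z := by rw [hexp_eq]
    _ = Real.exp (-(↑n * t ^ 2) / (128 * (↑r + 1))) * Z := rfl
end
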